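/- Let T be a rooted tree with n nodes and let K ≥ 1. With cost defined as: cost(v) = 0 for leaves, and cost(v) = Σ_i cost(v_i) + Σ_{i=1}^{d_v-1} min{n_{v₁}+⋯+n_{v_i}, K}·min{n_{v_{i+1}}, K} otherwise, we have Σ over all non-leaf nodes v of Σ_{i=1}^{d_v-1} min{n_{v₁}+⋯+n_{v_i}, K}·min{n_{v_{i+1}}, K} ≤ 2Kn. -/
import Mathlib


/-- Rooted trees with an ordered list of children. -/
inductive RTree where
  | node : List RTree → RTree

mutual
/-- Number of nodes in the subtree rooted at `v` (including `v`). -/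
def RTree.size : RTree → ℕ
  | .node cs => 1 + RTree.sizeList cs
def RTree.sizeList : List RTree → ℕ
  | [] => 0
  | t :: ts => RTree.size t + RTree.sizeList ts
end

/-- Given the running prefix sum `acc` of children sizes, adds
`min(acc,K)·min(nᵢ₊₁,K)` terms for the remaining children sizes. -/
def chainGo (K : ℕ) : ℕ → List ℕ → ℕ
  | _, [] => 0
  | acc, m :: rest => min acc K * min m K + chainGo K (acc + m) rest

/-- `Σ_{i=1}^{d-1} min(n₁+⋯+nᵢ, K)·min(nᵢ₊₁, K)` for the list of children sizes. -/
def chainCost (K : ℕ) : List ℕ → ℕ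
  | [] => 0
  | n :: rest => chainGo K n rest

mutual
/-- The recursive cost function: 0 on leaves, and otherwise the sum of children costs
plus `Σ_{i=1}^{d_v-1} min(n_{v₁}+⋯+n_{vᵢ}, K)·min(n_{vᵢ₊₁}, K)`. -/
def RTree.cost (K : ℕ) : RTree → ℕ
  | .node cs => RTree.costList K cs + chainCost K (cs.map RTree.size)
def RTree.costList (K : ℕ) : List RTree → ℕ
  | [] => 0
  | t :: ts => RTree.cost K t + RTree.costList K ts
end

/-- Potential function: `F K x = 2K·min(x,K) − min(x,K)²`. -/
def Fpot (K x : ℕ) : ℕ := 2 * K * min x K - min x K * min x K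

lemma Fpot_step (K s m : ℕ) :
    min s K * min m K + Fpot K (s + m) ≤ Fpot K s + Fpot K m := by
  unfold Fpot
  generalize ha : min s K = a
  generalize hb : min m K = b
  generalize hc : min (s + m) K = c
  have haK : a ≤ K := by omega
  have hbK : b ≤ K := by omega
  have hcK : c ≤ K := by omega
  have hd : c = a + b ∨ (c = K ∧ K ≤ a + b) := by omega
  have P1 : a * b + 2 * K * c + a * a + b * b ≤ 2 * K * a + 2 * K * b + c * c := by
    rcases hd with h | ⟨h, hab⟩
    · subst h; nlinarith
    · rw [h]
      zify
      nlinarith [mul_le_mul (show (a : ℤ) + b - K ≤ a by linarith)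
        (show (a : ℤ) + b - K ≤ b by linarith)
        (show (0 : ℤ) ≤ a + b - K by linarith)
        (show (0 : ℤ) ≤ a by positivity)]
  have h2a : a * a ≤ 2 * K * a := by nlinarith
  have h2b : b * b ≤ 2 * K * b := by nlinarith
  have h2c : c * c ≤ 2 * K * c := by nlinarith
  zify [h2a, h2b, h2c]
  push_cast at P1 ⊢
  linarith

lemma Fpot_succ (K x : ℕ) : Fpot K (x + 1) ≤ 2 * K + Fpot K x := by
  unfold Fpot
  generalize ha : min x K = a
  generalize hc : min (x + 1) K = c
  have haK : a ≤ K := by omega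
  have hcK : c ≤ K := by omega
  have hd : c = a ∨ c = a + 1 := by omega
  rcases hd with h | h
  · subst h; exact Nat.le_add_left _ _
  · subst h
    have h1 : a * a ≤ 2 * K * a := by nlinarith
    have h2 : (a + 1) * (a + 1) ≤ 2 * K * (a + 1) := by nlinarith
    zify [h1, h2]
    nlinarith

lemma chainGo_le (K : ℕ) : ∀ (ms : List ℕ) (acc : ℕ),
    chainGo K acc ms + Fpot K (acc + ms.sum) ≤ Fpot K acc + (ms.map (Fpot K)).sum := by
  intro ms
  induction ms with
  | nil => intro acc; simp [chainGo]
  | cons m rest ih =>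
    intro acc
    simp only [chainGo, List.sum_cons, List.map_cons, List.sum_cons]
    have h1 := Fpot_step K acc m
    have h2 := ih (acc + m)
    have hr : acc + (m + rest.sum) = acc + m + rest.sum := by ring
    rw [hr]
    linarith

lemma sizeList_eq_sum (ts : List RTree) :
    RTree.sizeList ts = (ts.map RTree.size).sum := by
  induction ts with
  | nil => simp [RTree.sizeList]
  | cons t ts ih => simp [RTree.sizeList, ih]

lemma chainCost_le (K : ℕ) (cs : List RTree) :
    chainCost K (cs.map RTree.size) + Fpot K (RTree.sizeList cs)
      ≤ (cs.map (fun t => Fpot K t.size)).sum := by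
  cases cs with
  | nil => simp [chainCost, RTree.sizeList, Fpot]
  | cons c rest =>
    simp only [List.map_cons, chainCost, RTree.sizeList, List.sum_cons]
    have h := chainGo_le K (rest.map RTree.size) c.size
    rw [← sizeList_eq_sum rest] at h
    have hm : ((rest.map RTree.size).map (Fpot K)).sum
        = (rest.map (fun t => Fpot K t.size)).sum := by
      rw [List.map_map]; rfl
    rw [hm] at h
    linarith

mutual
theorem costF (K : ℕ) (hK : 1 ≤ K) : (t : RTree) →
    t.cost K + Fpot K t.size ≤ 2 * K * t.size
  | .node cs => by
    have hB := costListF K hK cs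
    have hC := chainCost_le K cs
    have hS := Fpot_succ K (RTree.sizeList cs)
    simp only [RTree.cost, RTree.size]
    have h1 : 1 + RTree.sizeList cs = RTree.sizeList cs + 1 := by ring
    rw [h1]
    have h2 : 2 * K * (RTree.sizeList cs + 1) = 2 * K * RTree.sizeList cs + 2 * K := by
      ring
    rw [h2]
    linarith

theorem costListF (K : ℕ) (hK : 1 ≤ K) : (ts : List RTree) →
    RTree.costList K ts + (ts.map (fun t => Fpot K t.size)).sum
      ≤ 2 * K * RTree.sizeList ts
  | [] => by simp [RTree.costList, RTree.sizeList]
  | t :: ts => by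
    have h1 := costF K hK t
    have h2 := costListF K hK ts
    simp only [RTree.costList, RTree.sizeList, List.map_cons, List.sum_cons]
    have h3 : 2 * K * (t.size + RTree.sizeList ts)
        = 2 * K * t.size + 2 * K * RTree.sizeList ts := by ring
    rw [h3]
    linarith
end

/-- The sum over all non-leaf nodes v of
`Σ_{i=1}^{d_v-1} min(n_{v₁}+⋯+n_{vᵢ}, K)·min(n_{vᵢ₊₁}, K)` — which equals
`cost(root)` — is at most `2Kn`. -/
theorem total_local_cost_bound (K : ℕ) (hK : 1 ≤ K) (t : RTree) :
    t.cost K ≤ 2 * K * t.size := by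
  calc t.cost K ≤ t.cost K + Fpot K t.size := Nat.le_add_right _ _
    _ ≤ 2 * K * t.size := costF K hK t
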